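/- For integers $s \ge u \ge t \ge 0$, define $N(s,t,u)=\binom{u-t}{t}\binom{s-u+t}{u-t}+\binom{u-1-t}{t}\binom{s-u+t}{u-1-t}$, and for $d=2m+1$ define $\alpha_i(d,k)=\sum_{j=i-m}^{\lfloor i/2\rfloor}\bigl(2N(k-1,j,i)-N(k-2,j,i)\bigr)$. Then for $0\le i\le m$ and $k\ge d$, $\alpha_i(d,k)=\binom{k-1}{i}+\binom{k-2}{i-1}$. -/

import Mathlib

/-- Integer binomial coefficient, zero outside the range `0 ≤ b ≤ a`. -/
def ch (a b : ℤ) : ℤ := if 0 ≤ b ∧ b ≤ a then ((a.toNat).choose b.toNat : ℤ) else 0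

/-- `N(s,t,u)` from Dinh's count of new faces of ordinary polytopes. -/
def N (s t u : ℤ) : ℤ :=
  ch (u - t) t * ch (s - u + t) (u - t) + ch (u - 1 - t) t * ch (s - u + t) (u - 1 - t)

/-- For `d = 2m+1 ≥ 5`, `k ≥ d` and `0 ≤ i ≤ m`, the number
`α_i(d,k) = ∑_{j=i-m}^{⌊i/2⌋} (2N(k-1,j,i) - N(k-2,j,i))` of new `i`-faces
simplifies to `C(k-1,i) + C(k-2,i-1)`. -/
lemma ch_out {a b : ℤ} (h : b < 0 ∨ a < b) : ch a b = 0 := by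
  rw [ch, if_neg (by omega)]

lemma ch_coe (a b : ℕ) : ch (a : ℤ) (b : ℤ) = (a.choose b : ℤ) := by
  rw [ch]
  split_ifs with h
  · simp
  · rw [Nat.choose_eq_zero_of_lt (by omega)]
    simp

lemma ch_pascal (n k : ℤ) (hn : 1 ≤ n) : ch n k = ch (n-1) k + ch (n-1) (k-1) := by
  rcases lt_or_ge k 0 with hk | hk
  · rw [ch_out (Or.inl hk), ch_out (Or.inl hk), ch_out (Or.inl (by omega))]; ring
  rcases lt_or_ge n k with hnk | hnk
  · rw [ch_out (Or.inr hnk), ch_out (Or.inr (by omega)), ch_out (Or.inr (by omega))]; ring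
  obtain ⟨b, rfl⟩ : ∃ b : ℕ, k = (b : ℤ) := ⟨k.toNat, by omega⟩
  obtain ⟨a, rfl⟩ : ∃ a : ℕ, n = (a : ℤ) + 1 := ⟨(n-1).toNat, by omega⟩
  rcases b with _ | c
  · rw [ch, if_pos (by omega), ch, if_pos (by omega), ch_out (Or.inl (by omega))]
    simp
  · have e1 : (a : ℤ) + 1 = ((a + 1 : ℕ) : ℤ) := by push_cast; ring
    have e2 : (a : ℤ) + 1 - 1 = ((a : ℕ) : ℤ) := by push_cast; ring
    have e3 : ((c + 1 : ℕ) : ℤ) - 1 = ((c : ℕ) : ℤ) := by push_cast; ring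
    rw [e2, e3, e1, ch_coe, ch_coe, ch_coe, Nat.choose_succ_succ]
    push_cast; ring

lemma pascal_or (n k c m : ℤ) (h : m ≤ n - 1) :
    (ch n k - ch (n-1) k - ch (n-1) (k-1)) * ch c m = 0 := by
  rcases le_or_gt 1 n with h1 | h1
  · rw [ch_pascal n k h1]; ring
  · rw [ch_out (Or.inl (by omega : m < 0))]; ring

lemma N_t_neg {s t u : ℤ} (h : t < 0) : N s t u = 0 := by
  rw [N, ch_out (Or.inl h), ch_out (Or.inl h)]; ring

lemma N_big_t {s t u : ℤ} (h : u < 2*t) : N s t u = 0 := by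
  rw [N, ch_out (Or.inr (by omega : u - t < t)), ch_out (Or.inr (by omega : u - 1 - t < t))]; ring

lemma Nrec (s t u : ℤ) (ht : 0 ≤ t) (hu : 2 ≤ u) (hs : u ≤ s) :
    N s t u = N (s-1) t u + N (s-2) (t-1) (u-2) + N (s-2) t (u-1) := by
  rcases lt_or_ge (s - u + t) 1 with hc | hc
  · have hs' : s = u := by omega
    have ht' : t = 0 := by omega
    subst hs' ht'
    simp only [N]
    rw [ch_out (Or.inr (by omega : s - s + 0 < s - 0)),
        ch_out (Or.inr (by omega : s - s + 0 < s - 1 - 0)),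
        ch_out (Or.inr (by omega : s - 1 - s + 0 < s - 0)),
        ch_out (Or.inr (by omega : s - 1 - s + 0 < s - 1 - 0)),
        ch_out (Or.inl (by omega : (0:ℤ) - 1 < 0)),
        ch_out (Or.inl (by omega : (0:ℤ) - 1 < 0)),
        ch_out (Or.inr (by omega : s - 2 - (s-1) + 0 < s - 1 - 0)),
        ch_out (Or.inr (by omega : s - 2 - (s-1) + 0 < s - 1 - 1 - 0))]
    ring
  · have h1 := ch_pascal (s-u+t) (u-t) (by omega)
    have h2 := ch_pascal (s-u+t) (u-t-1) (by omega)
    have h3 := pascal_or (u-t) t (s-u+t-1) (u-t-1) (by omega)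
    have h4 := pascal_or (u-t-1) t (s-u+t-1) (u-t-2) (by omega)
    simp only [N]
    simp only [show u - 1 - t = u - t - 1 from by ring,
      show u - 2 - (t-1) = u - t - 1 from by ring,
      show u - 2 - 1 - (t-1) = u - t - 2 from by ring,
      show u - 1 - 1 - t = u - t - 2 from by ring,
      show s - 1 - u + t = s - u + t - 1 from by ring,
      show s - 2 - (u - 2) + (t - 1) = s - u + t - 1 from by ring,
      show s - 2 - (u - 1) + t = s - u + t - 1 from by ring,
      show u - t - 1 - 1 = u - t - 2 from by ring] at h1 h2 h3 h4 ⊢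
    linear_combination ch (u-t) t * h1 + ch (u-t-1) t * h2 + h3 + h4

def F (s : ℤ) (i : ℕ) : ℤ := ∑ j ∈ Finset.range (i/2+1), N s (j : ℤ) (i : ℤ)

lemma F_low {s : ℤ} {i : ℕ} (h : s < (i : ℤ)) : F s i = 0 := by
  apply Finset.sum_eq_zero
  intro j hj
  have hj2 : j ≤ i / 2 := by simpa [Nat.lt_succ_iff] using hj
  have hj3 : 2 * j ≤ i := by omega
  rw [N, ch_out (Or.inr (by push_cast; omega : s - i + j < (i:ℤ) - j))]
  rcases eq_or_lt_of_le hj3 with he | hlt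
  · rw [ch_out (Or.inr (by push_cast; omega : (i:ℤ) - 1 - j < (j:ℤ)))]; ring
  · rw [ch_out (Or.inr (by push_cast; omega : s - i + j < (i:ℤ) - 1 - j))]; ring

lemma Frec (i : ℕ) (s : ℤ) (hs : (i:ℤ) + 2 ≤ s) :
    F s (i+2) = F (s-1) (i+2) + F (s-2) (i+1) + F (s-2) i := by
  have step : ∀ j ∈ Finset.range ((i+2)/2+1),
      N s (j:ℤ) (((i+2):ℕ):ℤ) = N (s-1) (j:ℤ) (((i+2):ℕ):ℤ) + N (s-2) ((j:ℤ)-1) (i:ℤ)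
        + N (s-2) (j:ℤ) (((i+1):ℕ):ℤ) := by
    intro j _
    have := Nrec s (j:ℤ) ((i:ℤ)+2) (by positivity) (by omega) hs
    rw [show (i:ℤ)+2-2 = (i:ℤ) from by ring, show (i:ℤ)+2-1 = (i:ℤ)+1 from by ring] at this
    push_cast
    exact this
  have hB : ∑ j ∈ Finset.range ((i+2)/2+1), N (s-2) ((j:ℤ)-1) (i:ℤ) = F (s-2) i := by
    have hn : (i+2)/2 + 1 = (i/2 + 1) + 1 := by omega
    rw [hn, Finset.sum_range_succ']
    have h0 : N (s-2) (((0:ℕ):ℤ)-1) (i:ℤ) = 0 := N_t_neg (by norm_num)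
    rw [h0, add_zero, F]
    apply Finset.sum_congr rfl
    intro j _
    congr 1
    push_cast; ring
  have hC : ∑ j ∈ Finset.range ((i+2)/2+1), N (s-2) (j:ℤ) (((i+1):ℕ):ℤ) = F (s-2) (i+1) := by
    rw [F]
    by_cases hp : i % 2 = 0
    · have hn : (i+2)/2 + 1 = ((i+1)/2 + 1) + 1 := by omega
      rw [hn, Finset.sum_range_succ]
      have h0 : N (s-2) (((i+1)/2 + 1 : ℕ) : ℤ) (((i+1):ℕ):ℤ) = 0 := by
        apply N_big_t
        have h2 : i + 1 < 2*((i+1)/2+1) := by omega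
        exact_mod_cast h2
      rw [h0, add_zero]
    · have hn : (i+2)/2 + 1 = (i+1)/2 + 1 := by omega
      rw [hn]
  rw [F, Finset.sum_congr rfl step, Finset.sum_add_distrib, Finset.sum_add_distrib, hB, hC]
  have hA : (∑ x ∈ Finset.range ((i+2)/2+1), N (s-1) (x:ℤ) (((i+2):ℕ):ℤ)) = F (s-1) (i+2) := rfl
  rw [hA]
  ring

lemma ch_dpascal (s a : ℤ) (h : 2 ≤ s) :
    ch s (a+2) = ch (s-1) (a+2) + ch (s-2) (a+1) + ch (s-2) a := by
  have p1 := ch_pascal s (a+2) (by omega)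
  have p2 := ch_pascal (s-1) (a+1) (by omega)
  rw [show a+2-1 = a+1 from by ring] at p1
  rw [show a+1-1 = a from by ring, show s-1-1 = s-2 from by ring] at p2
  linarith

lemma F_eq (i : ℕ) : ∀ s : ℤ, F s i = ch s i := by
  induction i using Nat.strong_induction_on with
  | _ i ih =>
    match i with
    | 0 =>
      intro s
      rw [F, show (0:ℕ)/2+1 = 1 from rfl, Finset.sum_range_one]
      rw [N]
      norm_num
      rw [show ch (-1) 0 = 0 from ch_out (Or.inr (by norm_num)),
        show ch 0 0 = 1 from by rw [ch]; norm_num]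
      ring
    | 1 =>
      intro s
      rw [F, show (1:ℕ)/2+1 = 1 from rfl, Finset.sum_range_one]
      rw [N]
      norm_num
      rw [show ch 1 0 = 1 from by rw [ch]; norm_num,
        show ch 0 0 = 1 from by rw [ch]; norm_num]
      rcases lt_or_ge s 1 with h | h
      · rw [ch_out (Or.inr (by omega : s - 1 < (0:ℤ))),
          ch_out (Or.inr (by omega : s - 1 < (1:ℤ))),
          ch_out (Or.inr (by omega : s < (1:ℤ)))]
        ring
      · have := ch_pascal s 1 h
        rw [show (1:ℤ)-1 = 0 from by ring] at this
        linarith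
    | (i+2) =>
      intro s
      rcases lt_or_ge s ((i:ℤ)+2) with h | h
      · rw [F_low (by push_cast; omega), ch_out (Or.inr (by push_cast; omega))]
      · obtain ⟨n, rfl⟩ : ∃ n : ℕ, s = ((i:ℤ)+1) + n := ⟨(s - (i+1)).toNat, by omega⟩
        clear h
        induction n with
        | zero =>
          rw [F_low (by push_cast; omega), ch_out (Or.inr (by push_cast; omega))]
        | succ n ihn =>
          have hs' : (i:ℤ)+2 ≤ (i:ℤ)+1+((n+1:ℕ):ℤ) := by push_cast; omega
          rw [Frec i _ hs']
          rw [show (i:ℤ)+1+((n+1:ℕ):ℤ) - 1 = (i:ℤ)+1+(n:ℤ) from by push_cast; ring]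
          rw [ihn, ih (i+1) (by omega) _, ih i (by omega) _]
          have hd := ch_dpascal ((i:ℤ)+1+((n+1:ℕ):ℤ)) (i:ℤ) (by push_cast; omega)
          rw [show (i:ℤ)+1+((n+1:ℕ):ℤ)-1 = (i:ℤ)+1+(n:ℤ) from by push_cast; ring,
            show (i:ℤ)+1+((n+1:ℕ):ℤ)-2 = (i:ℤ)+(n:ℤ) from by push_cast; ring] at hd
          rw [show (i:ℤ)+1+((n+1:ℕ):ℤ)-2 = (i:ℤ)+(n:ℤ) from by push_cast; ring]
          push_cast at hd ⊢
          linarith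

theorem alpha_simplification (d m k i : ℕ) (hd : d = 2 * m + 1) (hd5 : 5 ≤ d)
    (hk : d ≤ k) (hi : i ≤ m) :
    ∑ j ∈ Finset.Icc (i - m) (i / 2),
        (2 * N ((k : ℤ) - 1) (j : ℤ) (i : ℤ) - N ((k : ℤ) - 2) (j : ℤ) (i : ℤ))
      = ch ((k : ℤ) - 1) (i : ℤ) + ch ((k : ℤ) - 2) ((i : ℤ) - 1) := by
  have hIcc : Finset.Icc (i - m) (i / 2) = Finset.range (i/2 + 1) := by
    have h0 : i - m = 0 := by omega
    rw [h0]
    ext x; simp [Nat.lt_succ_iff]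
  rw [hIcc]
  have hsplit : ∑ j ∈ Finset.range (i/2+1),
      (2 * N ((k:ℤ)-1) (j:ℤ) (i:ℤ) - N ((k:ℤ)-2) (j:ℤ) (i:ℤ))
      = 2 * F ((k:ℤ)-1) i - F ((k:ℤ)-2) i := by
    rw [F, F, Finset.mul_sum, ← Finset.sum_sub_distrib]
  rw [hsplit, F_eq, F_eq]
  have hp := ch_pascal ((k:ℤ)-1) (i:ℤ) (by omega)
  rw [show (k:ℤ)-1-1 = (k:ℤ)-2 from by ring] at hp
  linarith
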